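/- The lattice A_4(C) = (1/2){x ∈ Z^n : x mod 4 ∈ C} obtained by Construction A from a linear Z4-code C of length n is integral (with respect to the standard inner product on R^n) if and only if C is self-orthogonal with respect to the Z4-valued inner product ⟨x,y⟩ = Σ x_i y_i. -/

import Mathlib

lemma sum_quarter (n : ℕ) (x y : Fin n → ℤ) :
    ∑ i, ((x i : ℚ) / 2) * ((y i : ℚ) / 2) = ((∑ i, x i * y i : ℤ) : ℚ) / 4 := by
  push_cast
  rw [Finset.sum_div]
  exact Finset.sum_congr rfl fun i _ => by ring

/-- The lattice `A₄(𝒞) = (1/2){x ∈ ℤⁿ : x mod 4 ∈ 𝒞}` obtained by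
Construction A from a linear `ℤ₄`-code `𝒞` is integral iff `𝒞` is self-orthogonal. -/
theorem constructionA_integral_iff_selfOrthogonal (n : ℕ)
    (𝒞 : AddSubgroup (Fin n → ZMod 4)) :
    (∀ x y : Fin n → ℤ,
        (fun i => (x i : ZMod 4)) ∈ 𝒞 → (fun i => (y i : ZMod 4)) ∈ 𝒞 →
        ∃ m : ℤ, ∑ i, ((x i : ℚ) / 2) * ((y i : ℚ) / 2) = (m : ℚ)) ↔
      (∀ c ∈ 𝒞, ∀ c' ∈ 𝒞, ∑ i, c i * c' i = 0) := by
  constructor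
  · intro h c hc c' hc'
    set x : Fin n → ℤ := fun i => ((c i).val : ℤ) with hx
    set y : Fin n → ℤ := fun i => ((c' i).val : ℤ) with hy
    have hxc : (fun i => (x i : ZMod 4)) = c := by
      funext i; simp [hx, ZMod.natCast_val, ZMod.cast_id]
    have hyc : (fun i => (y i : ZMod 4)) = c' := by
      funext i; simp [hy, ZMod.natCast_val, ZMod.cast_id]
    obtain ⟨m, hm⟩ := h x y (hxc ▸ hc) (hyc ▸ hc')
    rw [sum_quarter] at hm
    have h4 : (4 : ℤ) ∣ ∑ i, x i * y i := by
      refine ⟨m, ?_⟩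
      have : ((∑ i, x i * y i : ℤ) : ℚ) = 4 * m := by linarith [hm]
      exact_mod_cast this
    have := (ZMod.intCast_zmod_eq_zero_iff_dvd (∑ i, x i * y i) 4).mpr h4
    push_cast at this
    calc ∑ i, c i * c' i = ∑ i, ((x i : ZMod 4)) * ((y i : ZMod 4)) :=
          Finset.sum_congr rfl fun i _ => by
            rw [congrFun hxc i, congrFun hyc i]
      _ = 0 := this
  · intro h x y hx hy
    have h0 := h _ hx _ hy
    have h4 : (4 : ℤ) ∣ ∑ i, x i * y i := by
      have := (ZMod.intCast_zmod_eq_zero_iff_dvd (∑ i, x i * y i) 4).mp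
        (by push_cast; exact h0)
      exact_mod_cast this
    obtain ⟨m, hm⟩ := h4
    refine ⟨m, ?_⟩
    rw [sum_quarter, hm]
    push_cast
    ring
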